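/- Let W be a Morse sequence. Then the maps ∂̂_p are boundary operators and the maps δ̂_p are coboundary operators: for every p, ∂̂_p ∘ ∂̂_{p+1} = 0 and δ̂_{p+1} ∘ δ̂_p = 0. -/

import Mathlib

/-! ## Basic notions: simplicial complexes, collapses, expansions, fillings -/

variable {V : Type*} [DecidableEq V]

/-- A (finite) simplicial complex: a finite collection of nonempty finite sets that is
closed under taking nonempty subsets. -/
def IsComplex (K : Finset (Finset V)) : Prop :=
  ∀ τ ∈ K, τ.Nonempty ∧ ∀ σ, σ ⊆ τ → σ.Nonempty → σ ∈ K

/-- `ν` is a facet (inclusion-maximal face) of `K`. -/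
def IsFacet (K : Finset (Finset V)) (ν : Finset V) : Prop :=
  ν ∈ K ∧ ∀ ρ ∈ K, ν ⊆ ρ → ρ = ν

/-- `(σ, τ)` is a free pair for `K`: `σ ⊊ τ` and `τ` is the only face of `K`
strictly containing `σ`. -/
def IsFreePair (K : Finset (Finset V)) (σ τ : Finset V) : Prop :=
  σ ∈ K ∧ τ ∈ K ∧ σ ⊂ τ ∧ ∀ ρ ∈ K, σ ⊂ ρ → ρ = τ

/-- `K` is an elementary expansion of `L` (equivalently, `L` is an elementary collapse
of `K`): `L = K \ {σ, τ}` for some free pair `(σ, τ)` of `K`. -/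
def ElemExpansion (L K : Finset (Finset V)) : Prop :=
  ∃ σ τ, IsFreePair K σ τ ∧ L = K \ {σ, τ}

/-- `K` is an elementary filling of `L` (equivalently, `L` is an elementary perforation
of `K`): `L = K \ {ν}` for some facet `ν` of `K`. -/
def ElemFilling (L K : Finset (Finset V)) : Prop :=
  ∃ ν, IsFacet K ν ∧ L = K \ {ν}

/-- `L` is an elementary collapse of `K`. -/
def ElemCollapse (K L : Finset (Finset V)) : Prop :=
  ∃ σ τ, IsFreePair K σ τ ∧ L = K \ {σ, τ}

/-- `K` collapses onto `L`: there is a sequence of elementary collapses from `K` to `L`. -/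
def CollapsesOnto (K L : Finset (Finset V)) : Prop :=
  Relation.ReflTransGen ElemCollapse K L

/-! ## Morse sequences -/

/-- A Morse sequence `⟨∅ = K₀, …, K_k = K⟩`: each `K_i` is a simplicial complex that is
an elementary expansion or an elementary filling of `K_{i-1}`. -/
structure MorseSeq (V : Type*) [DecidableEq V] where
  k : ℕ
  seq : ℕ → Finset (Finset V)
  cpx : ∀ i ≤ k, IsComplex (seq i)
  init : seq 0 = ∅
  step : ∀ i, 1 ≤ i → i ≤ k → ElemExpansion (seq (i - 1)) (seq i) ∨ ElemFilling (seq (i - 1)) (seq i)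

/-- The simplicial complex `K = K_k` on which the Morse sequence lives. -/
def MorseSeq.cplx (W : MorseSeq V) : Finset (Finset V) := W.seq W.k

/-- A face added by a filling step: a critical face of `W`. -/
def MorseSeq.Critical (W : MorseSeq V) (ν : Finset V) : Prop :=
  ∃ i, 1 ≤ i ∧ i ≤ W.k ∧ W.seq i \ W.seq (i - 1) = {ν}

/-- `(σ, τ)` is a regular pair for `W`: the two faces are added together by an
elementary expansion step. -/
def MorseSeq.Regular (W : MorseSeq V) (σ τ : Finset V) : Prop :=
  ∃ i, 1 ≤ i ∧ i ≤ W.k ∧ σ ⊂ τ ∧ W.seq i \ W.seq (i - 1) = {σ, τ}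

/-- `σ` is lower regular for `W`. -/
def MorseSeq.LowerRegular (W : MorseSeq V) (σ : Finset V) : Prop := ∃ τ, W.Regular σ τ

/-- `τ` is upper regular for `W`. -/
def MorseSeq.UpperRegular (W : MorseSeq V) (τ : Finset V) : Prop := ∃ σ, W.Regular σ τ

/-! ## Chains modulo 2 -/

/-- The boundary `∂(σ)` of a simplex: the chain of its (nonempty) codimension-one faces. -/
def bd (σ : Finset V) : Finset (Finset V) :=
  σ.powerset.filter fun ρ => ρ.Nonempty ∧ ρ.card + 1 = σ.card

/-- The coboundary `δ(σ)` of a simplex in `K`: the chain of faces of `K` of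
codimension one over `σ` containing `σ`. -/
def cobd (K : Finset (Finset V)) (σ : Finset V) : Finset (Finset V) :=
  K.filter fun τ => σ ⊆ τ ∧ σ.card + 1 = τ.card

/-- Mod-2 linear extension: `chainSum c f` is the sum (symmetric difference) of
the chains `f σ` over `σ ∈ c`; an element belongs to it iff it belongs to an odd
number of the `f σ`. -/
def chainSum (c : Finset (Finset V)) (f : Finset V → Finset (Finset V)) : Finset (Finset V) :=
  (c.biUnion f).filter fun ν => (c.filter fun σ => ν ∈ f σ).card % 2 = 1

/-- `c` is a `p`-chain of `K`: a set of `p`-simplices of `K`. -/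
def IsChainOf (K : Finset (Finset V)) (p : ℕ) (c : Finset (Finset V)) : Prop :=
  ∀ ν ∈ c, ν ∈ K ∧ ν.card = p + 1

/-- `c` is a chain of critical `p`-simplices of `W` (an element of `Ŵ[p]`). -/
def IsCritChain (W : MorseSeq V) (p : ℕ) (c : Finset (Finset V)) : Prop :=
  ∀ ν ∈ c, W.Critical ν ∧ ν.card = p + 1

/-! ## Frames, reference and coreference maps -/

/-- A frame on `W`: it assigns to each `p`-simplex of `K` a chain of critical
`p`-simplices of `W`. -/
def IsFrame (W : MorseSeq V) (Υ : Finset V → Finset (Finset V)) : Prop :=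
  ∀ ν ∈ W.cplx, ∀ μ ∈ Υ ν, W.Critical μ ∧ μ.card = ν.card

/-- `Λ` is the reference map of `W`: a frame with `Λ(ν) = ν` for critical `ν`, and
`Λ(τ) = 0`, `Λ(∂τ) = 0` for upper regular `τ`. -/
def IsRefMap (W : MorseSeq V) (Λ : Finset V → Finset (Finset V)) : Prop :=
  IsFrame W Λ ∧ (∀ ν, W.Critical ν → Λ ν = {ν}) ∧
    ∀ τ, W.UpperRegular τ → Λ τ = ∅ ∧ chainSum (bd τ) Λ = ∅

/-- `Λ` is the coreference map of `W`: a frame with `Λ(ν) = ν` for critical `ν`, and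
`Λ(σ) = 0`, `Λ(δσ) = 0` for lower regular `σ`. -/
def IsCorefMap (W : MorseSeq V) (Λ : Finset V → Finset (Finset V)) : Prop :=
  IsFrame W Λ ∧ (∀ ν, W.Critical ν → Λ ν = {ν}) ∧
    ∀ σ, W.LowerRegular σ → Λ σ = ∅ ∧ chainSum (cobd W.cplx σ) Λ = ∅

/-- The extension map `∧̃` of `W` (defined from the coreference map `Vee`):
`∧̃(κ) = {ν ∈ K | κ ∈ ∨(ν)}`. -/
def extMap (W : MorseSeq V) (Vee : Finset V → Finset (Finset V)) (κ : Finset V) :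
    Finset (Finset V) :=
  W.cplx.filter fun ν => κ ∈ Vee ν

/-- The coextension map `∨̃` of `W` (defined from the reference map `Λ`):
`∨̃(κ) = {ν ∈ K | κ ∈ ∧(ν)}`. -/
def coextMap (W : MorseSeq V) (Λ : Finset V → Finset (Finset V)) (κ : Finset V) :
    Finset (Finset V) :=
  W.cplx.filter fun ν => κ ∈ Λ ν


set_option linter.unusedSectionVars false

section helpers
variable {V : Type*} [DecidableEq V]

noncomputable def phi (c : Finset (Finset V)) : (Finset V) →₀ ZMod 2 :=
  ∑ ν ∈ c, Finsupp.single ν 1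

noncomputable def lmap (f : Finset V → Finset (Finset V)) :
    ((Finset V) →₀ ZMod 2) →ₗ[ZMod 2] ((Finset V) →₀ ZMod 2) :=
  Finsupp.linearCombination _ (fun ρ => phi (f ρ))

lemma phi_apply (c : Finset (Finset V)) (ν : Finset V) :
    phi c ν = if ν ∈ c then 1 else 0 := by
  simp [phi, Finsupp.finset_sum_apply, Finsupp.single_apply]

lemma phi_empty : phi (∅ : Finset (Finset V)) = 0 := by simp [phi]

lemma phi_singleton (ρ : Finset V) : phi ({ρ} : Finset (Finset V)) = Finsupp.single ρ 1 := by
  simp [phi]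

lemma phi_eq_zero {c : Finset (Finset V)} (h : phi c = 0) : c = ∅ := by
  by_contra hne
  obtain ⟨ν, hν⟩ := Finset.nonempty_iff_ne_empty.2 hne
  have := congrArg (fun x => x ν) h
  simp [phi_apply, hν] at this

lemma addself (x : (Finset V) →₀ ZMod 2) : x + x = 0 := by
  ext a; simp [CharTwo.add_self_eq_zero]

lemma eq_of_addzero {a b : (Finset V) →₀ ZMod 2} (h : a + b = 0) : a = b := by
  calc a = a + b + b := by rw [add_assoc, addself, add_zero]
  _ = b := by rw [h, zero_add]

lemma phi_erase {σ : Finset V} {s : Finset (Finset V)} (h : σ ∈ s) :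
    phi s = Finsupp.single σ 1 + phi (s.erase σ) :=
  (Finset.add_sum_erase s _ h).symm

lemma lmap_single (f : Finset V → Finset (Finset V)) (ρ : Finset V) :
    lmap f (Finsupp.single ρ 1) = phi (f ρ) := by
  simp [lmap, Finsupp.linearCombination_single]

lemma lmap_phi (f : Finset V → Finset (Finset V)) (c : Finset (Finset V)) :
    lmap f (phi c) = ∑ σ ∈ c, phi (f σ) := by
  rw [phi, map_sum]
  exact Finset.sum_congr rfl fun σ _ => lmap_single f σ

lemma mem_chainSum {c : Finset (Finset V)} {f : Finset V → Finset (Finset V)} {μ : Finset V} :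
    μ ∈ chainSum c f ↔ (c.filter fun σ => μ ∈ f σ).card % 2 = 1 := by
  constructor
  · intro h; exact (Finset.mem_filter.1 h).2
  · intro h
    refine Finset.mem_filter.2 ⟨?_, h⟩
    have : (c.filter fun σ => μ ∈ f σ).Nonempty := by
      rw [← Finset.card_pos]; omega
    obtain ⟨σ, hσ⟩ := this
    rw [Finset.mem_filter] at hσ
    exact Finset.mem_biUnion.2 ⟨σ, hσ.1, hσ.2⟩

lemma phi_chainSum (c : Finset (Finset V)) (f : Finset V → Finset (Finset V)) :
    phi (chainSum c f) = lmap f (phi c) := by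
  ext μ
  rw [lmap_phi, Finsupp.finset_sum_apply, phi_apply]
  have : ∑ σ ∈ c, (phi (f σ)) μ = ((c.filter fun σ => μ ∈ f σ).card : ZMod 2) := by
    simp only [phi_apply]
    rw [Finset.sum_boole]
  rw [this]
  by_cases h : μ ∈ chainSum c f
  · rw [if_pos h]
    have hodd := mem_chainSum.1 h
    rw [← ZMod.natCast_mod _ 2, hodd]; rfl
  · rw [if_neg h]
    have heven : (c.filter fun σ => μ ∈ f σ).card % 2 = 0 := by
      have hne : ¬ ((c.filter fun σ => μ ∈ f σ).card % 2 = 1) := fun hh => h (mem_chainSum.2 hh)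
      omega
    rw [← ZMod.natCast_mod _ 2, heven]; rfl

lemma lmap_comp (g h : Finset V → Finset (Finset V)) (x : (Finset V) →₀ ZMod 2) :
    lmap (fun ν => chainSum (g ν) h) x = lmap h (lmap g x) := by
  induction x using Finsupp.induction_linear with
  | zero => simp
  | add a b ha hb => simp [map_add, ha, hb]
  | single a b =>
    have : Finsupp.single a b = b • Finsupp.single a (1 : ZMod 2) := by
      rw [Finsupp.smul_single, smul_eq_mul, mul_one]
    rw [this, map_smul, map_smul, map_smul, lmap_single, lmap_single, ← phi_chainSum]
end helpers

section dd
variable {V : Type*} [DecidableEq V]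

lemma mem_bd {ρ σ : Finset V} : ρ ∈ bd σ ↔ ρ ⊆ σ ∧ ρ.Nonempty ∧ ρ.card + 1 = σ.card := by
  simp [bd, Finset.mem_filter, Finset.mem_powerset, and_assoc]

lemma mem_cobd {K : Finset (Finset V)} {τ σ : Finset V} :
    τ ∈ cobd K σ ↔ τ ∈ K ∧ σ ⊆ τ ∧ σ.card + 1 = τ.card := by
  simp [cobd, Finset.mem_filter, and_assoc]

lemma card_filter_eval {s : Finset (Finset V)} {p : Finset V → Prop} [DecidablePred p]
    (h : (s.filter p).card = 0 ∨ (s.filter p).card = 2) :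
    (((s.filter p).card : ℕ) : ZMod 2) = 0 := by
  rcases h with h | h <;> rw [h] <;> decide

lemma dd (τ : Finset V) : lmap bd (phi (bd τ)) = 0 := by
  rw [lmap_phi]
  ext ρ
  rw [Finsupp.finset_sum_apply, Finsupp.coe_zero, Pi.zero_apply]
  have hsum : ∑ σ ∈ bd τ, (phi (bd σ)) ρ = (((bd τ).filter fun σ => ρ ∈ bd σ).card : ZMod 2) := by
    simp only [phi_apply]; rw [Finset.sum_boole]
  rw [hsum]
  apply card_filter_eval
  rcases Finset.eq_empty_or_nonempty ((bd τ).filter fun σ => ρ ∈ bd σ) with he | ⟨σ0, hσ0⟩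
  · left; rw [he]; rfl
  · right
    rw [Finset.mem_filter] at hσ0
    obtain ⟨hσ0τ, hρσ0⟩ := hσ0
    rw [mem_bd] at hσ0τ hρσ0
    obtain ⟨hστ, hσne, hσc⟩ := hσ0τ
    obtain ⟨hρσ, hρne, hρc⟩ := hρσ0
    have hρτ : ρ ⊆ τ := hρσ.trans hστ
    have hρτc : ρ.card + 2 = τ.card := by omega
    have himg : ((bd τ).filter fun σ => ρ ∈ bd σ) = (τ \ ρ).image (fun x => insert x ρ) := by
      ext σ
      rw [Finset.mem_filter, Finset.mem_image]
      constructor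
      · rintro ⟨h1, h2⟩
        rw [mem_bd] at h1 h2
        obtain ⟨hs1, hs2, hs3⟩ := h1
        obtain ⟨hr1, hr2, hr3⟩ := h2
        have hcard : (σ \ ρ).card = 1 := by
          rw [Finset.card_sdiff_of_subset hr1]; omega
        obtain ⟨x, hx⟩ := Finset.card_eq_one.1 hcard
        refine ⟨x, ?_, ?_⟩
        · have hxσ : x ∈ σ \ ρ := by rw [hx]; exact Finset.mem_singleton_self x
          rw [Finset.mem_sdiff] at hxσ
          exact Finset.mem_sdiff.2 ⟨hs1 hxσ.1, hxσ.2⟩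
        · have := Finset.union_sdiff_of_subset hr1
          rw [hx] at this
          rw [← this, Finset.union_comm]; rfl
      · rintro ⟨x, hx, rfl⟩
        rw [Finset.mem_sdiff] at hx
        constructor
        · rw [mem_bd]
          refine ⟨Finset.insert_subset hx.1 hρτ, Finset.insert_nonempty _ _, ?_⟩
          rw [Finset.card_insert_of_notMem hx.2]; omega
        · rw [mem_bd]
          refine ⟨Finset.subset_insert _ _, hρne, ?_⟩
          rw [Finset.card_insert_of_notMem hx.2]
    rw [himg, Finset.card_image_of_injOn, Finset.card_sdiff_of_subset hρτ]
    · omega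
    · intro x hx y hy hxy
      rw [Finset.mem_coe, Finset.mem_sdiff] at hx hy
      simp only at hxy
      have : x ∈ insert y ρ := by rw [← hxy]; exact Finset.mem_insert_self x ρ
      rcases Finset.mem_insert.1 this with h | h
      · exact h
      · exact absurd h hx.2

lemma ddK {K : Finset (Finset V)} (hK : IsComplex K) (ν : Finset V) :
    lmap (cobd K) (phi (cobd K ν)) = 0 := by
  rw [lmap_phi]
  ext ρ
  rw [Finsupp.finset_sum_apply, Finsupp.coe_zero, Pi.zero_apply]
  have hsum : ∑ σ ∈ cobd K ν, (phi (cobd K σ)) ρ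
      = (((cobd K ν).filter fun σ => ρ ∈ cobd K σ).card : ZMod 2) := by
    simp only [phi_apply]; rw [Finset.sum_boole]
  rw [hsum]
  apply card_filter_eval
  rcases Finset.eq_empty_or_nonempty ((cobd K ν).filter fun σ => ρ ∈ cobd K σ) with he | ⟨σ0, hσ0⟩
  · left; rw [he]; rfl
  · right
    rw [Finset.mem_filter] at hσ0
    obtain ⟨hσ0ν, hρσ0⟩ := hσ0
    rw [mem_cobd] at hσ0ν hρσ0
    obtain ⟨hσK, hνσ, hνc⟩ := hσ0ν
    obtain ⟨hρK, hσρ, hσc⟩ := hρσ0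
    have hνρ : ν ⊆ ρ := hνσ.trans hσρ
    have hνρc : ν.card + 2 = ρ.card := by omega
    have himg : ((cobd K ν).filter fun σ => ρ ∈ cobd K σ) = (ρ \ ν).image (fun x => insert x ν) := by
      ext σ
      rw [Finset.mem_filter, Finset.mem_image]
      constructor
      · rintro ⟨h1, h2⟩
        rw [mem_cobd] at h1 h2
        obtain ⟨hs1, hs2, hs3⟩ := h1
        obtain ⟨hr1, hr2, hr3⟩ := h2
        have hcard : (σ \ ν).card = 1 := by
          rw [Finset.card_sdiff_of_subset hs2]; omega
        obtain ⟨x, hx⟩ := Finset.card_eq_one.1 hcard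
        refine ⟨x, ?_, ?_⟩
        · have hxσ : x ∈ σ \ ν := by rw [hx]; exact Finset.mem_singleton_self x
          rw [Finset.mem_sdiff] at hxσ
          exact Finset.mem_sdiff.2 ⟨hr2 hxσ.1, hxσ.2⟩
        · have := Finset.union_sdiff_of_subset hs2
          rw [hx] at this
          rw [← this, Finset.union_comm]; rfl
      · rintro ⟨x, hx, rfl⟩
        rw [Finset.mem_sdiff] at hx
        have hsub : insert x ν ⊆ ρ := Finset.insert_subset hx.1 hνρ
        have hmem : insert x ν ∈ K := (hK ρ hρK).2 _ hsub (Finset.insert_nonempty _ _)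
        constructor
        · rw [mem_cobd]
          refine ⟨hmem, Finset.subset_insert _ _, ?_⟩
          rw [Finset.card_insert_of_notMem hx.2]
        · rw [mem_cobd]
          refine ⟨hρK, hsub, ?_⟩
          rw [Finset.card_insert_of_notMem hx.2]; omega
    rw [himg, Finset.card_image_of_injOn, Finset.card_sdiff_of_subset hνρ]
    · omega
    · intro x hx y hy hxy
      rw [Finset.mem_coe, Finset.mem_sdiff] at hx hy
      simp only at hxy
      have : x ∈ insert y ν := by rw [← hxy]; exact Finset.mem_insert_self x ν
      rcases Finset.mem_insert.1 this with h | h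
      · exact h
      · exact absurd h hx.2
end dd

section mapn
variable {V : Type*} [DecidableEq V]

lemma map2_phi (A B : ((Finset V) →₀ ZMod 2) →ₗ[ZMod 2] ((Finset V) →₀ ZMod 2))
    (s : Finset (Finset V)) :
    A (B (phi s)) = ∑ ρ ∈ s, A (B (Finsupp.single ρ 1)) := by
  rw [phi, map_sum, map_sum]

lemma map3_phi (A B C : ((Finset V) →₀ ZMod 2) →ₗ[ZMod 2] ((Finset V) →₀ ZMod 2))
    (s : Finset (Finset V)) :
    A (B (C (phi s))) = ∑ ρ ∈ s, A (B (C (Finsupp.single ρ 1))) := by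
  rw [phi, map_sum, map_sum, map_sum]

lemma map4_phi (A B C D : ((Finset V) →₀ ZMod 2) →ₗ[ZMod 2] ((Finset V) →₀ ZMod 2))
    (s : Finset (Finset V)) :
    A (B (C (D (phi s)))) = ∑ ρ ∈ s, A (B (C (D (Finsupp.single ρ 1)))) := by
  rw [phi, map_sum, map_sum, map_sum, map_sum]
end mapn

section morse
variable {V : Type*} [DecidableEq V]

lemma subset_prev (W : MorseSeq V) {i : ℕ} (h1 : 1 ≤ i) (hik : i ≤ W.k) :
    W.seq (i-1) ⊆ W.seq i := by
  rcases W.step i h1 hik with ⟨σ, τ, _, h⟩ | ⟨ν, _, h⟩ <;> rw [h] <;> exact Finset.sdiff_subset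

lemma seq_mono (W : MorseSeq V) : ∀ j, j ≤ W.k → ∀ i, i ≤ j → W.seq i ⊆ W.seq j := by
  intro j
  induction j with
  | zero => intro _ i hi; rw [Nat.le_zero.1 hi]
  | succ j IHj =>
    intro hj i hi
    rcases Nat.lt_or_ge i (j+1) with h | h
    · refine (IHj (by omega) i (by omega)).trans ?_
      have h2 := subset_prev W (i := j+1) (by omega) hj
      simpa using h2
    · have : i = j + 1 := by omega
      rw [this]

lemma sdiff_pair {s : Finset (Finset V)} {σ τ : Finset V} (hσ : σ ∈ s) (hτ : τ ∈ s) :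
    s \ (s \ {σ, τ}) = {σ, τ} := by
  ext a
  simp only [Finset.mem_sdiff, Finset.mem_insert, Finset.mem_singleton]
  constructor
  · intro h
    by_contra hcon
    push_neg at hcon
    exact h.2 ⟨h.1, by tauto⟩
  · rintro (rfl | rfl)
    · exact ⟨hσ, fun hh => hh.2 (Or.inl rfl)⟩
    · exact ⟨hτ, fun hh => hh.2 (Or.inr rfl)⟩

lemma sdiff_single {s : Finset (Finset V)} {ν : Finset V} (hν : ν ∈ s) :
    s \ (s \ {ν}) = {ν} := by
  ext a
  simp only [Finset.mem_sdiff, Finset.mem_singleton]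
  constructor
  · intro h
    by_contra hcon
    exact h.2 ⟨h.1, hcon⟩
  · rintro rfl
    exact ⟨hν, fun hh => hh.2 rfl⟩

lemma freePair_card {K : Finset (Finset V)} (hK : IsComplex K) {σ τ : Finset V}
    (h : IsFreePair K σ τ) : σ.card + 1 = τ.card := by
  obtain ⟨hσ, hτ, hst, hmax⟩ := h
  obtain ⟨x, hxτ, hxσ⟩ := Finset.exists_of_ssubset hst
  have hsub : insert x σ ⊆ τ := Finset.insert_subset hxτ hst.subset
  have hmem : insert x σ ∈ K := (hK τ hτ).2 _ hsub (Finset.insert_nonempty _ _)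
  have heq : insert x σ = τ := hmax _ hmem (Finset.ssubset_insert hxσ)
  rw [← heq, Finset.card_insert_of_notMem hxσ]

lemma first_index (W : MorseSeq V) {ρ : Finset V} (h : ρ ∈ W.seq W.k) :
    ∃ j, 1 ≤ j ∧ j ≤ W.k ∧ ρ ∈ W.seq j ∧ ∀ j' < j, ρ ∉ W.seq j' := by
  have hex : ∃ j, ρ ∈ W.seq j := ⟨W.k, h⟩
  have h1 : 1 ≤ Nat.find hex := by
    rcases Nat.eq_zero_or_pos (Nat.find hex) with h0 | h0
    · have hs := Nat.find_spec hex
      rw [h0, W.init] at hs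
      exact absurd hs (Finset.notMem_empty ρ)
    · exact h0
  exact ⟨Nat.find hex, h1, Nat.find_min' hex h, Nat.find_spec hex,
    fun j' hj' => Nat.find_min hex hj'⟩

lemma crit_mem (W : MorseSeq V) {ν : Finset V} (h : W.Critical ν) : ν ∈ W.seq W.k := by
  obtain ⟨i, h1, hik, heq⟩ := h
  have hν : ν ∈ W.seq i := by
    have h2 : ν ∈ W.seq i \ W.seq (i-1) := by rw [heq]; exact Finset.mem_singleton_self ν
    exact (Finset.mem_sdiff.1 h2).1
  exact seq_mono W W.k le_rfl i hik hν

lemma step_cases (W : MorseSeq V) {i : ℕ} {ρ : Finset V} (h1 : 1 ≤ i) (hik : i ≤ W.k)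
    (hρ : ρ ∈ W.seq i) (hprev : ρ ∉ W.seq (i-1)) :
    W.Critical ρ ∨
    (∃ σ τ, IsFreePair (W.seq i) σ τ ∧ W.seq i \ W.seq (i-1) = {σ, τ} ∧ (ρ = σ ∨ ρ = τ)) := by
  rcases W.step i h1 hik with ⟨σ, τ, hfree, heq⟩ | ⟨ν, hfacet, heq⟩
  · right
    refine ⟨σ, τ, hfree, ?_, ?_⟩
    · rw [heq, sdiff_pair hfree.1 hfree.2.1]
    · rw [heq, Finset.mem_sdiff] at hprev
      have hmem : ρ ∈ ({σ, τ} : Finset (Finset V)) := by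
        by_contra hcon
        exact hprev ⟨hρ, hcon⟩
      simpa using hmem
  · left
    have hρν : ρ = ν := by
      rw [heq, Finset.mem_sdiff] at hprev
      have hmem : ρ ∈ ({ν} : Finset (Finset V)) := by
        by_contra hcon
        exact hprev ⟨hρ, hcon⟩
      simpa using hmem
    exact ⟨i, h1, hik, by rw [heq, sdiff_single hfacet.1, hρν]⟩

lemma keyA (W : MorseSeq V) (Λ : Finset V → Finset (Finset V)) (hΛ : IsRefMap W Λ) :
    ∀ i, i ≤ W.k → ∀ ρ ∈ W.seq i,
      lmap Λ (lmap bd (lmap Λ (Finsupp.single ρ 1))) = lmap Λ (lmap bd (Finsupp.single ρ 1)) := by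
  intro i
  induction i using Nat.strong_induction_on with
  | _ i IH =>
    intro hik ρ hρ
    rcases Nat.eq_zero_or_pos i with h0 | h1
    · rw [h0, W.init] at hρ; exact absurd hρ (Finset.notMem_empty ρ)
    by_cases hprev : ρ ∈ W.seq (i-1)
    · exact IH (i-1) (by omega) (by omega) ρ hprev
    rcases step_cases W h1 hik hρ hprev with hcrit | ⟨σ, τ, hfree, hdiff, hcase⟩
    · rw [lmap_single, hΛ.2.1 ρ hcrit, phi_singleton]
    · have hreg : W.Regular σ τ := ⟨i, h1, hik, hfree.2.2.1, hdiff⟩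
      have hup := hΛ.2.2 τ ⟨σ, hreg⟩
      rcases hcase with rfl | rfl
      · -- ρ is lower regular
        have hcard : ρ.card + 1 = τ.card := freePair_card (W.cpx i hik) hfree
        have hρbd : ρ ∈ bd τ :=
          mem_bd.2 ⟨hfree.2.2.1.subset, (W.cpx i hik ρ hfree.1).1, hcard⟩
        have h0' : lmap Λ (phi (bd τ)) = 0 := by
          rw [← phi_chainSum, hup.2, phi_empty]
        have hsplit : phi (bd τ) = Finsupp.single ρ 1 + phi ((bd τ).erase ρ) := phi_erase hρbd
        have h1' : lmap Λ (Finsupp.single ρ 1) = lmap Λ (phi ((bd τ).erase ρ)) := by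
          apply eq_of_addzero
          rw [← map_add, ← hsplit, h0']
        rw [h1']
        have hstep2 : lmap Λ (lmap bd (lmap Λ (phi ((bd τ).erase ρ))))
            = lmap Λ (lmap bd (phi ((bd τ).erase ρ))) := by
          rw [map3_phi, map2_phi]
          refine Finset.sum_congr rfl fun σ' hσ' => ?_
          have hσ'mem := Finset.mem_erase.1 hσ'
          have hb := mem_bd.1 hσ'mem.2
          have hσ'i : σ' ∈ W.seq i := (W.cpx i hik τ hfree.2.1).2 σ' hb.1 hb.2.1
          have hne : σ' ≠ τ := by
            intro hh
            rw [hh] at hb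
            omega
          have hσ'prev : σ' ∈ W.seq (i-1) := by
            by_contra hcon
            have hin : σ' ∈ W.seq i \ W.seq (i-1) := Finset.mem_sdiff.2 ⟨hσ'i, hcon⟩
            rw [hdiff] at hin
            rcases Finset.mem_insert.1 hin with hh | hh
            · exact hσ'mem.1 hh
            · exact hne (Finset.mem_singleton.1 hh)
          exact IH (i-1) (by omega) (by omega) σ' hσ'prev
        rw [hstep2]
        have hsplit2 : phi ((bd τ).erase ρ) = Finsupp.single ρ 1 + phi (bd τ) := by
          rw [hsplit, ← add_assoc, addself, zero_add]
        rw [hsplit2, map_add, dd τ, add_zero]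
      · -- ρ is upper regular
        have hL : lmap Λ (Finsupp.single ρ 1) = 0 := by rw [lmap_single, hup.1, phi_empty]
        have hR : lmap Λ (lmap bd (Finsupp.single ρ 1)) = 0 := by
          rw [lmap_single, ← phi_chainSum, hup.2, phi_empty]
        rw [hL, map_zero, map_zero, hR]

lemma keyB (W : MorseSeq V) (Vee : Finset V → Finset (Finset V)) (hV : IsCorefMap W Vee) :
    ∀ n i ρ, W.k - i ≤ n → 1 ≤ i → i ≤ W.k → ρ ∈ W.seq i → ρ ∉ W.seq (i-1) →
      lmap Vee (lmap (cobd W.cplx) (lmap Vee (Finsupp.single ρ 1)))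
        = lmap Vee (lmap (cobd W.cplx) (Finsupp.single ρ 1)) := by
  intro n
  induction n using Nat.strong_induction_on with
  | _ n IH =>
    intro i ρ hn h1 hik hρ hprev
    rcases step_cases W h1 hik hρ hprev with hcrit | ⟨σ, τ, hfree, hdiff, hcase⟩
    · rw [lmap_single, hV.2.1 ρ hcrit, phi_singleton]
    · have hreg : W.Regular σ τ := ⟨i, h1, hik, hfree.2.2.1, hdiff⟩
      have hlow := hV.2.2 σ ⟨τ, hreg⟩
      rcases hcase with rfl | rfl
      · -- ρ is lower regular : both sides vanish
        have hL : lmap Vee (Finsupp.single ρ 1) = 0 := by rw [lmap_single, hlow.1, phi_empty]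
        have hR : lmap Vee (lmap (cobd W.cplx) (Finsupp.single ρ 1)) = 0 := by
          rw [lmap_single, ← phi_chainSum, hlow.2, phi_empty]
        rw [hL, map_zero, map_zero, hR]
      · -- ρ is upper regular
        have hcard : σ.card + 1 = ρ.card := freePair_card (W.cpx i hik) hfree
        have hρK : ρ ∈ W.cplx := seq_mono W W.k le_rfl i hik hρ
        have hρcobd : ρ ∈ cobd W.cplx σ := mem_cobd.2 ⟨hρK, hfree.2.2.1.subset, hcard⟩
        have h0' : lmap Vee (phi (cobd W.cplx σ)) = 0 := by
          rw [← phi_chainSum, hlow.2, phi_empty]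
        have hsplit : phi (cobd W.cplx σ) = Finsupp.single ρ 1 + phi ((cobd W.cplx σ).erase ρ) :=
          phi_erase hρcobd
        have h1' : lmap Vee (Finsupp.single ρ 1) = lmap Vee (phi ((cobd W.cplx σ).erase ρ)) := by
          apply eq_of_addzero
          rw [← map_add, ← hsplit, h0']
        rw [h1']
        have hstep2 : lmap Vee (lmap (cobd W.cplx) (lmap Vee (phi ((cobd W.cplx σ).erase ρ))))
            = lmap Vee (lmap (cobd W.cplx) (phi ((cobd W.cplx σ).erase ρ))) := by
          rw [map3_phi, map2_phi]
          refine Finset.sum_congr rfl fun τ' hτ' => ?_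
          have hτ'mem := Finset.mem_erase.1 hτ'
          have hcb := mem_cobd.1 hτ'mem.2
          have hne : σ ≠ τ' := by
            intro hh
            rw [hh] at hcb
            omega
          have hστ' : σ ⊂ τ' := HasSubset.Subset.ssubset_of_ne hcb.2.1 hne
          have hτ'not_i : τ' ∉ W.seq i := by
            intro hin
            exact hτ'mem.1 (hfree.2.2.2 τ' hin hστ')
          obtain ⟨j, hj1, hjk, hjmem, hjmin⟩ := first_index W hcb.1
          have hij : i < j := by
            by_contra hcon
            push_neg at hcon
            exact hτ'not_i (seq_mono W i hik j hcon hjmem)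
          exact IH (W.k - j) (by omega) j τ' le_rfl hj1 hjk hjmem (hjmin (j-1) (by omega))
        rw [hstep2]
        have hsplit2 : phi ((cobd W.cplx σ).erase ρ)
            = Finsupp.single ρ 1 + phi (cobd W.cplx σ) := by
          rw [hsplit, ← add_assoc, addself, zero_add]
        have hdd : lmap (cobd W.cplx) (phi (cobd W.cplx σ)) = 0 := ddK (W.cpx W.k le_rfl) σ
        rw [hsplit2, map_add, hdd, add_zero]

lemma keyB_all (W : MorseSeq V) (Vee : Finset V → Finset (Finset V)) (hV : IsCorefMap W Vee)
    {ρ : Finset V} (hρ : ρ ∈ W.seq W.k) :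
    lmap Vee (lmap (cobd W.cplx) (lmap Vee (Finsupp.single ρ 1)))
      = lmap Vee (lmap (cobd W.cplx) (Finsupp.single ρ 1)) := by
  obtain ⟨j, hj1, hjk, hjmem, hjmin⟩ := first_index W hρ
  exact keyB W Vee hV (W.k - j) j ρ le_rfl hj1 hjk hjmem (hjmin (j-1) (by omega))
end morse

/-- The maps `∂̂` are boundary operators and the maps `δ̂` are coboundary
operators: `∂̂ ∘ ∂̂ = 0` and `δ̂ ∘ δ̂ = 0` on chains of critical simplices. -/
theorem critical_boundary_is_boundary_operator (W : MorseSeq V)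
    (Λ Vee : Finset V → Finset (Finset V))
    (hΛ : IsRefMap W Λ) (hV : IsCorefMap W Vee)
    (p : ℕ) (c : Finset (Finset V)) (hc : IsCritChain W p c) :
    chainSum (chainSum c (fun ν => chainSum (bd ν) Λ)) (fun ν => chainSum (bd ν) Λ) = ∅ ∧
    chainSum (chainSum c (fun ν => chainSum (cobd W.cplx ν) Vee))
      (fun ν => chainSum (cobd W.cplx ν) Vee) = ∅ := by
  constructor
  · refine phi_eq_zero ?_
    rw [phi_chainSum, phi_chainSum, lmap_comp bd Λ, lmap_comp bd Λ]
    rw [map4_phi]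
    refine Finset.sum_eq_zero fun ν hν => ?_
    have hνK : ν ∈ W.seq W.k := crit_mem W (hc ν hν).1
    rw [lmap_single]
    have hmid : lmap Λ (lmap bd (lmap Λ (phi (bd ν)))) = lmap Λ (lmap bd (phi (bd ν))) := by
      rw [map3_phi, map2_phi]
      refine Finset.sum_congr rfl fun ρ hρ => ?_
      have hb := mem_bd.1 hρ
      have hρK : ρ ∈ W.seq W.k := (W.cpx W.k le_rfl ν hνK).2 ρ hb.1 hb.2.1
      exact keyA W Λ hΛ W.k le_rfl ρ hρK
    rw [hmid, dd ν, map_zero]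
  · refine phi_eq_zero ?_
    rw [phi_chainSum, phi_chainSum, lmap_comp (cobd W.cplx) Vee, lmap_comp (cobd W.cplx) Vee]
    rw [map4_phi]
    refine Finset.sum_eq_zero fun ν hν => ?_
    rw [lmap_single]
    have hmid : lmap Vee (lmap (cobd W.cplx) (lmap Vee (phi (cobd W.cplx ν))))
        = lmap Vee (lmap (cobd W.cplx) (phi (cobd W.cplx ν))) := by
      rw [map3_phi, map2_phi]
      refine Finset.sum_congr rfl fun ρ hρ => ?_
      have hρK : ρ ∈ W.seq W.k := (mem_cobd.1 hρ).1
      exact keyB_all W Vee hV hρK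
    have hdd : lmap (cobd W.cplx) (phi (cobd W.cplx ν)) = 0 := ddK (W.cpx W.k le_rfl) ν
    rw [hmid, hdd, map_zero]
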